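/- Fix real constants β ≥ 2, 0 < ε₁ < 1 and ε₂ > e with 1 - ε₁ + ε₁ ln ε₁ > 1/(√2 β). Let a : ℕ → ℝ satisfy a(n) = √2·β·(ln n)/n. Suppose that for each n ≥ 2, on a probability space there are k(n) = ⌈1/a(n)⌉ random variables X_{n,1}, …, X_{n,k(n)}, each (not necessarily independent) distributed according to the Poisson distribution with parameter n·a(n). Then the probability of the event that there exists an index i with X_{n,i} ≤ ε₁·n·a(n) or X_{n,i} ≥ ε₂·n·a(n) tends to 0 as n → ∞. -/

import Mathlib

open MeasureTheory Finset Nat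
open scoped ENNReal

lemma tsum_pow_div_factorial_le (x : ℝ) (hx : 0 ≤ x) :
    ∑' j : ℕ, x ^ j / j ! ≤ Real.exp x :=
  Real.tsum_le_of_sum_range_le
    (fun j => div_nonneg (pow_nonneg hx j) (by positivity))
    fun n => Real.sum_le_exp_of_nonneg hx n

lemma poisson_lower_tail (μ ε : ℝ) (hμ : 0 ≤ μ) (hε0 : 0 < ε) (hε1 : ε < 1) :
    ∑ j ∈ range (⌊ε * μ⌋₊ + 1), Real.exp (-μ) * μ ^ j / j ! ≤
      Real.exp (-(μ * (1 - ε + ε * Real.log ε))) := by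
  set m := ⌊ε * μ⌋₊ with hm
  have hεμ : 0 ≤ ε * μ := mul_nonneg hε0.le hμ
  have hmle : (m : ℝ) ≤ ε * μ := Nat.floor_le hεμ
  have hlog : Real.log ε < 0 := Real.log_neg hε0 hε1
  have hεm : 0 < ε ^ m := pow_pos hε0 m
  have step1 : ∑ j ∈ range (m + 1), Real.exp (-μ) * μ ^ j / j ! ≤
      (ε ^ m)⁻¹ * Real.exp (-μ) * ∑ j ∈ range (m + 1), (ε * μ) ^ j / j ! := by
    rw [mul_assoc, Finset.mul_sum, Finset.mul_sum]
    refine Finset.sum_le_sum fun j hj => ?_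
    have hj' : j ≤ m := Nat.lt_succ_iff.mp (Finset.mem_range.mp hj)
    have h1 : ε ^ m ≤ ε ^ j := pow_le_pow_of_le_one hε0.le hε1.le hj'
    have h2 : (1 : ℝ) ≤ (ε ^ m)⁻¹ * ε ^ j := by
      rw [inv_mul_eq_div, le_div_iff₀ hεm]; simpa using h1
    have hterm : 0 ≤ Real.exp (-μ) * μ ^ j / j ! := by positivity
    calc Real.exp (-μ) * μ ^ j / j !
        ≤ ((ε ^ m)⁻¹ * ε ^ j) * (Real.exp (-μ) * μ ^ j / j !) :=
          le_mul_of_one_le_left hterm h2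
      _ = (ε ^ m)⁻¹ * (Real.exp (-μ) * ((ε * μ) ^ j / j !)) := by
          rw [mul_pow]; ring
  have step2 : ∑ j ∈ range (m + 1), (ε * μ) ^ j / j ! ≤ Real.exp (ε * μ) :=
    Real.sum_le_exp_of_nonneg hεμ _
  have hεminv : (ε ^ m)⁻¹ = Real.exp (-((m : ℝ) * Real.log ε)) := by
    have h3 : ε ^ m = Real.exp ((m : ℝ) * Real.log ε) := by
      rw [Real.exp_nat_mul, Real.exp_log hε0]
    rw [h3, ← Real.exp_neg]
  have step3 : (ε ^ m)⁻¹ ≤ Real.exp (-(ε * μ * Real.log ε)) := by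
    rw [hεminv]
    exact Real.exp_le_exp.mpr (neg_le_neg (mul_le_mul_of_nonpos_right hmle hlog.le))
  calc ∑ j ∈ range (m + 1), Real.exp (-μ) * μ ^ j / j !
      ≤ (ε ^ m)⁻¹ * Real.exp (-μ) * ∑ j ∈ range (m + 1), (ε * μ) ^ j / j ! := step1
    _ ≤ (ε ^ m)⁻¹ * Real.exp (-μ) * Real.exp (ε * μ) := by
        refine mul_le_mul_of_nonneg_left step2 (by positivity)
    _ ≤ Real.exp (-(ε * μ * Real.log ε)) * Real.exp (-μ) * Real.exp (ε * μ) := by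
        refine mul_le_mul_of_nonneg_right (mul_le_mul_of_nonneg_right step3 (by positivity))
          (by positivity)
    _ = Real.exp (-(μ * (1 - ε + ε * Real.log ε))) := by
        rw [← Real.exp_add, ← Real.exp_add]; congr 1; ring

lemma poisson_upper_tail (μ ε₂ : ℝ) (hμ : 0 ≤ μ) (hε : Real.exp 1 ≤ ε₂) :
    ∑' t : ℕ, Real.exp (-μ) * μ ^ (⌈ε₂ * μ⌉₊ + t) / (⌈ε₂ * μ⌉₊ + t)! ≤ Real.exp (-μ) := by
  set M := ⌈ε₂ * μ⌉₊ with hM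
  set h : ℕ → ℝ := fun j => (Real.exp 1 * μ) ^ j / j ! with hh
  have hhnn : ∀ j, 0 ≤ h j := fun j => by positivity
  have hhsum : Summable h := Real.summable_pow_div_factorial _
  have hf : Summable (fun t : ℕ => Real.exp (-μ) * μ ^ (M + t) / (M + t)!) := by
    have h1 : Summable (fun t : ℕ => Real.exp (-μ) * μ ^ (t + M) / (t + M)!) := by
      have := (summable_nat_add_iff (f := fun j : ℕ => μ ^ j / j !) M).mpr
        (Real.summable_pow_div_factorial μ)
      simpa [mul_div_assoc] using this.mul_left (Real.exp (-μ))
    refine h1.congr fun t => by rw [add_comm]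
  have hg : Summable (fun t : ℕ => Real.exp (-(M : ℝ)) * Real.exp (-μ) * h (M + t)) := by
    have h1 : Summable (fun t : ℕ => h (t + M)) := (summable_nat_add_iff M).mpr hhsum
    exact ((h1.congr fun t => by rw [add_comm]).mul_left _)
  have hle : ∀ t : ℕ, Real.exp (-μ) * μ ^ (M + t) / (M + t)! ≤
      Real.exp (-(M : ℝ)) * Real.exp (-μ) * h (M + t) := by
    intro t
    have hpow : (Real.exp 1) ^ (M + t) = Real.exp ((M : ℝ) + (t : ℝ)) := by
      rw [← Real.exp_nat_mul]; congr 1; push_cast; ring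
    have hexp : Real.exp (-(M : ℝ)) * Real.exp (-μ) * Real.exp ((M : ℝ) + (t : ℝ)) =
        Real.exp (t : ℝ) * Real.exp (-μ) := by
      rw [← Real.exp_add, ← Real.exp_add, ← Real.exp_add]; congr 1; ring
    have hid : Real.exp (-(M : ℝ)) * Real.exp (-μ) * h (M + t) =
        Real.exp t * (Real.exp (-μ) * μ ^ (M + t) / (M + t)!) := by
      simp only [hh, mul_pow, hpow]
      linear_combination (μ ^ (M + t) / (((M + t)! : ℕ) : ℝ)) * hexp
    rw [hid]
    exact le_mul_of_one_le_left (by positivity) (Real.one_le_exp (by positivity))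
  calc ∑' t : ℕ, Real.exp (-μ) * μ ^ (M + t) / (M + t)!
      ≤ ∑' t : ℕ, Real.exp (-(M : ℝ)) * Real.exp (-μ) * h (M + t) :=
        Summable.tsum_le_tsum hle hf hg
    _ = Real.exp (-(M : ℝ)) * Real.exp (-μ) * ∑' t : ℕ, h (M + t) := by
        rw [tsum_mul_left]
    _ ≤ Real.exp (-(M : ℝ)) * Real.exp (-μ) * Real.exp (Real.exp 1 * μ) := by
        refine mul_le_mul_of_nonneg_left ?_ (by positivity)
        have hshift : ∑' t : ℕ, h (M + t) ≤ ∑' j : ℕ, h j := by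
          have key := Summable.sum_add_tsum_nat_add (f := h) M hhsum
          have h0 : 0 ≤ ∑ i ∈ range M, h i := Finset.sum_nonneg fun i _ => hhnn i
          have heq : ∑' t : ℕ, h (M + t) = ∑' t : ℕ, h (t + M) :=
            tsum_congr fun t => by rw [add_comm]
          rw [heq]; linarith
        exact hshift.trans (tsum_pow_div_factorial_le _ (by positivity))
    _ ≤ Real.exp (-μ) := by
        rw [← Real.exp_add, ← Real.exp_add]
        refine Real.exp_le_exp.mpr ?_
        have h1 : Real.exp 1 * μ ≤ ε₂ * μ := mul_le_mul_of_nonneg_right hε hμ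
        have h2 : ε₂ * μ ≤ (M : ℝ) := Nat.le_ceil _
        linarith


/-- Fix `β ≥ 2`, `0 < ε₁ < 1`, `ε₂ > e` with
`1 - ε₁ + ε₁ ln ε₁ > 1/(√2 β)`. Let `a n = √2 β (ln n)/n`. Suppose for each `n ≥ 2`
there are `k n = ⌈1/a n⌉` random variables `X n i`, each distributed according to the
Poisson distribution with parameter `n · a n`. Then the probability that some `X n i`
is `≤ ε₁ n a n` or `≥ ε₂ n a n` tends to `0` as `n → ∞`. -/
theorem all_cells_have_order_na_nodes
    (β ε₁ ε₂ : ℝ) (hβ : 2 ≤ β) (hε₁0 : 0 < ε₁) (hε₁1 : ε₁ < 1)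
    (hε₂ : Real.exp 1 < ε₂)
    (hgap : 1 / (Real.sqrt 2 * β) < 1 - ε₁ + ε₁ * Real.log ε₁)
    (a : ℕ → ℝ) (ha : ∀ n : ℕ, a n = Real.sqrt 2 * β * Real.log n / n)
    (k : ℕ → ℕ) (hk : ∀ n : ℕ, k n = ⌈1 / a n⌉₊)
    (Ω : ℕ → Type*) (mΩ : ∀ n, MeasurableSpace (Ω n))
    (ℙ : ∀ n, Measure (Ω n)) (hprob : ∀ n, IsProbabilityMeasure (ℙ n))
    (X : ∀ n, Fin (k n) → Ω n → ℕ)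
    (hXmeas : ∀ n, ∀ i : Fin (k n), Measurable (X n i))
    (hpois : ∀ n : ℕ, 2 ≤ n → ∀ i : Fin (k n), ∀ j : ℕ,
      ℙ n {ω | X n i ω = j} =
        ENNReal.ofReal (Real.exp (-(n * a n)) * (n * a n) ^ j / (Nat.factorial j))) :
    Filter.Tendsto
      (fun n : ℕ => ℙ n {ω | ∃ i : Fin (k n),
        (X n i ω : ℝ) ≤ ε₁ * (n * a n) ∨ ε₂ * (n * a n) ≤ (X n i ω : ℝ)})
      Filter.atTop (nhds 0) := by
  have hβ0 : (0:ℝ) < β := lt_of_lt_of_le two_pos hβ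
  have hs2 : (1:ℝ) ≤ Real.sqrt 2 := by
    rw [show (1:ℝ) = Real.sqrt 1 by simp]
    exact Real.sqrt_le_sqrt (by norm_num)
  have hsb : (0:ℝ) < Real.sqrt 2 * β := by positivity
  have hc0 : (0:ℝ) < 1 - ε₁ + ε₁ * Real.log ε₁ := lt_trans (by positivity) hgap
  have hγ₁1 : 1 < Real.sqrt 2 * β * (1 - ε₁ + ε₁ * Real.log ε₁) := by
    have h := (div_lt_iff₀ hsb).mp hgap
    nlinarith [h]
  have hγ₂2 : (2:ℝ) ≤ Real.sqrt 2 * β :=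
    le_trans (by norm_num) (mul_le_mul hs2 hβ (by norm_num) (by linarith))
  have hγ₂1 : (1:ℝ) < Real.sqrt 2 * β := by linarith
  have key : ∀ n : ℕ, 2 ≤ n →
      ℙ n {ω | ∃ i : Fin (k n),
        (X n i ω : ℝ) ≤ ε₁ * (n * a n) ∨ ε₂ * (n * a n) ≤ (X n i ω : ℝ)} ≤
      ENNReal.ofReal ((n:ℝ) ^ (1 - Real.sqrt 2 * β * (1 - ε₁ + ε₁ * Real.log ε₁)) +
        (n:ℝ) ^ (1 - Real.sqrt 2 * β)) := by
    intro n hn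
    have hn2 : (2:ℝ) ≤ (n:ℝ) := by exact_mod_cast hn
    have hn0 : (0:ℝ) < n := by linarith
    have hn1 : (1:ℝ) < n := by linarith
    have hnne : (n:ℝ) ≠ 0 := hn0.ne'
    have hlogn : 0 < Real.log n := Real.log_pos hn1
    have hμ0 : 0 < (n:ℝ) * a n := by
      rw [ha n]; field_simp; positivity
    have hone : 1 ≤ Real.sqrt 2 * β * Real.log n := by
      have hl2 : Real.log 2 ≤ Real.log n := Real.log_le_log (by norm_num) hn2
      have hl0 : (0.6931471803:ℝ) < Real.log 2 := Real.log_two_gt_d9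
      have h1 := mul_le_mul_of_nonneg_left hl2 hsb.le
      have h2 := mul_le_mul_of_nonneg_right hγ₂2 (by linarith : (0:ℝ) ≤ Real.log 2)
      linarith
    have hkn : k n ≤ n := by
      rw [hk n, Nat.ceil_le, ha n, one_div_div,
        div_le_iff₀ (by positivity : (0:ℝ) < Real.sqrt 2 * β * Real.log n)]
      nlinarith [mul_le_mul_of_nonneg_left hone hn0.le]
    set μ := (n:ℝ) * a n with hμdef
    set m := ⌊ε₁ * μ⌋₊ with hm
    set M := ⌈ε₂ * μ⌉₊ with hM
    have hsub : {ω | ∃ i : Fin (k n), (X n i ω : ℝ) ≤ ε₁ * μ ∨ ε₂ * μ ≤ (X n i ω : ℝ)} ⊆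
        ⋃ i : Fin (k n), ((⋃ j ∈ Finset.range (m + 1), {ω | X n i ω = j}) ∪
          ⋃ t : ℕ, {ω | X n i ω = M + t}) := by
      rintro ω ⟨i, hi | hi⟩
      · refine Set.mem_iUnion.mpr ⟨i, Or.inl ?_⟩
        exact Set.mem_biUnion (Finset.mem_range.mpr (Nat.lt_succ_of_le (Nat.le_floor hi))) rfl
      · have hMle : M ≤ X n i ω := Nat.ceil_le.mpr hi
        exact Set.mem_iUnion.mpr ⟨i, Or.inr (Set.mem_iUnion.mpr
          ⟨X n i ω - M, (Nat.add_sub_cancel' hMle).symm⟩)⟩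
    have hL : ∀ i : Fin (k n),
        ℙ n (⋃ j ∈ Finset.range (m + 1), {ω | X n i ω = j}) ≤
          ENNReal.ofReal (Real.exp (-(μ * (1 - ε₁ + ε₁ * Real.log ε₁)))) := by
      intro i
      calc ℙ n (⋃ j ∈ Finset.range (m + 1), {ω | X n i ω = j})
          ≤ ∑ j ∈ Finset.range (m + 1), ℙ n {ω | X n i ω = j} :=
            measure_biUnion_finset_le _ _
        _ = ∑ j ∈ Finset.range (m + 1), ENNReal.ofReal (Real.exp (-μ) * μ ^ j / j !) := by
            exact Finset.sum_congr rfl fun j _ => hpois n hn i j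
        _ = ENNReal.ofReal (∑ j ∈ Finset.range (m + 1), Real.exp (-μ) * μ ^ j / j !) :=
            (ENNReal.ofReal_sum_of_nonneg fun j _ => by positivity).symm
        _ ≤ _ := ENNReal.ofReal_le_ofReal (poisson_lower_tail μ ε₁ hμ0.le hε₁0 hε₁1)
    have hU : ∀ i : Fin (k n),
        ℙ n (⋃ t : ℕ, {ω | X n i ω = M + t}) ≤ ENNReal.ofReal (Real.exp (-μ)) := by
      intro i
      have hfsum : Summable (fun t : ℕ => Real.exp (-μ) * μ ^ (M + t) / (M + t)!) := by
        have h1 : Summable (fun t : ℕ => Real.exp (-μ) * μ ^ (t + M) / (t + M)!) := by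
          have := (summable_nat_add_iff (f := fun j : ℕ => μ ^ j / j !) M).mpr
            (Real.summable_pow_div_factorial μ)
          simpa [mul_div_assoc] using this.mul_left (Real.exp (-μ))
        exact h1.congr fun t => by rw [add_comm]
      calc ℙ n (⋃ t : ℕ, {ω | X n i ω = M + t})
          ≤ ∑' t : ℕ, ℙ n {ω | X n i ω = M + t} := measure_iUnion_le _
        _ = ∑' t : ℕ, ENNReal.ofReal (Real.exp (-μ) * μ ^ (M + t) / (M + t)!) :=
            tsum_congr fun t => hpois n hn i (M + t)
        _ = ENNReal.ofReal (∑' t : ℕ, Real.exp (-μ) * μ ^ (M + t) / (M + t)!) :=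
            (ENNReal.ofReal_tsum_of_nonneg (fun t => by positivity) hfsum).symm
        _ ≤ _ := ENNReal.ofReal_le_ofReal (poisson_upper_tail μ ε₂ hμ0.le hε₂.le)
    calc ℙ n {ω | ∃ i : Fin (k n), (X n i ω : ℝ) ≤ ε₁ * μ ∨ ε₂ * μ ≤ (X n i ω : ℝ)}
        ≤ ℙ n (⋃ i : Fin (k n), ((⋃ j ∈ Finset.range (m + 1), {ω | X n i ω = j}) ∪
            ⋃ t : ℕ, {ω | X n i ω = M + t})) := measure_mono hsub
      _ ≤ ∑' i : Fin (k n), ℙ n ((⋃ j ∈ Finset.range (m + 1), {ω | X n i ω = j}) ∪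
            ⋃ t : ℕ, {ω | X n i ω = M + t}) := measure_iUnion_le _
      _ ≤ ∑' _i : Fin (k n), (ENNReal.ofReal (Real.exp (-(μ * (1 - ε₁ + ε₁ * Real.log ε₁)))) +
            ENNReal.ofReal (Real.exp (-μ))) := by
          refine Summable.tsum_le_tsum (fun i => ?_) ENNReal.summable ENNReal.summable
          exact le_trans (measure_union_le _ _) (add_le_add (hL i) (hU i))
      _ = (k n : ℝ≥0∞) * (ENNReal.ofReal (Real.exp (-(μ * (1 - ε₁ + ε₁ * Real.log ε₁)))) +
            ENNReal.ofReal (Real.exp (-μ))) := by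
          simp [tsum_fintype, Finset.sum_const, Finset.card_univ, nsmul_eq_mul, mul_add]
      _ ≤ (n : ℝ≥0∞) * (ENNReal.ofReal (Real.exp (-(μ * (1 - ε₁ + ε₁ * Real.log ε₁)))) +
            ENNReal.ofReal (Real.exp (-μ))) :=
          mul_le_mul' (by exact_mod_cast hkn) le_rfl
      _ = ENNReal.ofReal ((n:ℝ) * (Real.exp (-(μ * (1 - ε₁ + ε₁ * Real.log ε₁))) +
            Real.exp (-μ))) := by
          rw [← ENNReal.ofReal_add (by positivity) (by positivity),
            ← ENNReal.ofReal_natCast n, ← ENNReal.ofReal_mul (by positivity)]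
      _ = ENNReal.ofReal ((n:ℝ) ^ (1 - Real.sqrt 2 * β * (1 - ε₁ + ε₁ * Real.log ε₁)) +
            (n:ℝ) ^ (1 - Real.sqrt 2 * β)) := by
          congr 1
          have hn' : (n:ℝ) = Real.exp (Real.log n) := (Real.exp_log hn0).symm
          have hpow : ∀ γ : ℝ, (n:ℝ) * Real.exp (-(γ * Real.log n)) = (n:ℝ) ^ (1 - γ) := by
            intro γ
            rw [Real.rpow_def_of_pos hn0]
            nth_rewrite 1 [hn']
            rw [← Real.exp_add]; congr 1; ring
          have h1 : μ * (1 - ε₁ + ε₁ * Real.log ε₁) =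
              (Real.sqrt 2 * β * (1 - ε₁ + ε₁ * Real.log ε₁)) * Real.log n := by
            rw [hμdef, ha n]; field_simp
          have h2 : μ = (Real.sqrt 2 * β) * Real.log n := by
            rw [hμdef, ha n]; field_simp
          rw [mul_add, h1, h2, hpow, hpow]
  have hG : Filter.Tendsto (fun n : ℕ =>
      (n:ℝ) ^ (1 - Real.sqrt 2 * β * (1 - ε₁ + ε₁ * Real.log ε₁)) +
        (n:ℝ) ^ (1 - Real.sqrt 2 * β)) Filter.atTop (nhds 0) := by
    have t1 : Filter.Tendsto (fun n : ℕ =>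
        (n:ℝ) ^ (1 - Real.sqrt 2 * β * (1 - ε₁ + ε₁ * Real.log ε₁)))
        Filter.atTop (nhds 0) := by
      have := (tendsto_rpow_neg_atTop
        (by linarith : (0:ℝ) < Real.sqrt 2 * β * (1 - ε₁ + ε₁ * Real.log ε₁) - 1)).comp
        (tendsto_natCast_atTop_atTop (R := ℝ))
      simpa [Function.comp_def, neg_sub] using this
    have t2 : Filter.Tendsto (fun n : ℕ => (n:ℝ) ^ (1 - Real.sqrt 2 * β))
        Filter.atTop (nhds 0) := by
      have := (tendsto_rpow_neg_atTop
        (by linarith : (0:ℝ) < Real.sqrt 2 * β - 1)).comp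
        (tendsto_natCast_atTop_atTop (R := ℝ))
      simpa [Function.comp_def, neg_sub] using this
    simpa using t1.add t2
  have hofG := ENNReal.tendsto_ofReal hG
  rw [ENNReal.ofReal_zero] at hofG
  refine tendsto_of_tendsto_of_tendsto_of_le_of_le' tendsto_const_nhds hofG
    (Filter.Eventually.of_forall fun n => _root_.zero_le) ?_
  filter_upwards [Filter.eventually_ge_atTop 2] with n hn using key n hn
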